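/- arXiv:2502.01497 — 9 statements merged into one kernel-verified Lean document; each statement's English description precedes it below -/
import Mathlib

section
/- Let X be a set, U a symmetric subset of X × X containing the diagonal, and (W_i)_{i∈I} a family of subsets of X whose union is X. Suppose the composition U∘U is a Lebesgue entourage of (W_i), i.e. every subset B of X with B × B ⊆ U∘U is contained in some W_i. Then the U-thinnings U(W_i) := {x ∈ X | U[x] ⊆ W_i} still cover X; moreover there exists a partition (Ŵ_i)_{i∈I} of X (allowing empty members) with Ŵ_i ⊆ U(W_i) for every i, and consequently U[Ŵ_i] ⊆ W_i for every i. -/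
/-- For a symmetric entourage `U` containing the diagonal, if `U ∘ U` is a Lebesgue
entourage of a covering family `(W i)`, then the `U`-thinnings still cover, and there is a
partition refining the thinnings whose `U`-thickenings are contained in the `W i`. -/
theorem stmt_0 {X I : Type*} (U : Set (X × X))
    (hsym : ∀ a b : X, (a, b) ∈ U → (b, a) ∈ U)
    (hdiag : ∀ x : X, (x, x) ∈ U)
    (W : I → Set X)
    (hcov : ∀ x : X, ∃ i, x ∈ W i)
    (hleb : ∀ B : Set X, (∀ a ∈ B, ∀ b ∈ B, ∃ y : X, (a, y) ∈ U ∧ (y, b) ∈ U) →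
      ∃ i, B ⊆ W i) :
    (∀ x : X, ∃ i, {x' : X | (x', x) ∈ U} ⊆ W i) ∧
    ∃ Wpart : I → Set X,
      (∀ x : X, ∃! i, x ∈ Wpart i) ∧
      (∀ i, Wpart i ⊆ {x : X | {x' : X | (x', x) ∈ U} ⊆ W i}) ∧
      (∀ i, ∀ x ∈ Wpart i, ∀ x' : X, (x', x) ∈ U → x' ∈ W i) := by
  have key : ∀ x : X, ∃ i, {x' : X | (x', x) ∈ U} ⊆ W i := by
    intro x
    apply hleb
    intro a ha b hb
    exact ⟨x, ha, hsym b x hb⟩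
  refine ⟨key, ?_⟩
  choose f hf using key
  refine ⟨fun i => {x | f x = i}, ?_, ?_, ?_⟩
  · intro x
    exact ⟨f x, rfl, fun i hi => hi.symm⟩
  · intro i x hx
    simp only [Set.mem_setOf_eq] at hx ⊢
    exact hx ▸ hf x
  · intro i x hx x' hx'
    exact hx ▸ hf x hx'
end

section
/- Let (f : X → Y, 𝒵) be a branched coarse covering relative to a big family 𝒵 on Y. If P and P' are two coarse connections for f, then for every coarse entourage V of Y there exists a member Z of 𝒵 such that P ∩ f^{-1}(V_{Z^c}) = P' ∩ f^{-1}(V_{Z^c}), where V_{Z^c} := V ∩ (Y × (Y \ Z)) and f^{-1}(W) := (f × f)^{-1}(W). -/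
/-- A coarse structure on a set `X`: a collection of entourages containing the diagonal,
closed under subsets, finite unions, inverses and compositions. -/
structure CoarseStructureOn (X : Type*) where
  ent : Set (Set (X × X))
  diag_mem : {p : X × X | p.1 = p.2} ∈ ent
  subset_mem : ∀ ⦃V U : Set (X × X)⦄, U ∈ ent → V ⊆ U → V ∈ ent
  union_mem : ∀ ⦃U V : Set (X × X)⦄, U ∈ ent → V ∈ ent → U ∪ V ∈ ent
  inv_mem : ∀ ⦃U : Set (X × X)⦄, U ∈ ent → Prod.swap '' U ∈ ent
  comp_mem : ∀ ⦃U V : Set (X × X)⦄, U ∈ ent → V ∈ ent →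
    {p : X × X | ∃ y, (p.1, y) ∈ U ∧ (y, p.2) ∈ V} ∈ ent

/-- A big family on `Y`: a nonempty filtered family of subsets such that every coarse
thickening of a member is contained in a member. -/
structure IsBigFamily {Y : Type*} (C : CoarseStructureOn Y) (Z : Set (Set Y)) : Prop where
  nonempty : Z.Nonempty
  directed : ∀ A ∈ Z, ∀ B ∈ Z, ∃ D ∈ Z, A ⊆ D ∧ B ⊆ D
  big : ∀ V ∈ C.ent, ∀ A ∈ Z, ∃ B ∈ Z, {y : Y | ∃ a ∈ A, (y, a) ∈ V} ⊆ B

/-- `P` is a coarse connection for `f : X → Y` relative to the family `Z`: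
unique `P`-lifts at every coarse scale of `Y` away from a suitable member, the
corresponding restriction of `P` is a coarse entourage of `X`, and every coarse
entourage of `X` is contained in `P` away from a suitable member. -/
def IsConnection {X Y : Type*} (entX : Set (Set (X × X))) (entY : Set (Set (Y × Y)))
    (Z : Set (Set Y)) (f : X → Y) (P : Set (X × X)) : Prop :=
  (∀ V ∈ entY, ∃ A ∈ Z,
      (∀ y' y : Y, (y', y) ∈ V → y ∉ A → ∀ x : X, f x = y →
        ∃! x' : X, f x' = y' ∧ (x', x) ∈ P) ∧
      (P ∩ {p : X × X | (f p.1, f p.2) ∈ V ∧ f p.2 ∉ A}) ∈ entX) ∧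
  (∀ U ∈ entX, ∃ A ∈ Z, U ∩ {p : X × X | f p.2 ∉ A} ⊆ P)

/-- Essential uniqueness of the connection of a branched coarse covering: two connections
agree on the restriction of any coarse entourage of `Y` away from a suitable member of
the big family. -/
theorem stmt_2 {X Y : Type*} (CX : CoarseStructureOn X) (CY : CoarseStructureOn Y)
    (BX : Set (Set X)) (BY : Set (Set Y))
    (Z : Set (Set Y)) (hZ : IsBigFamily CY Z)
    (f : X → Y)
    (hcontrolled : ∀ U ∈ CX.ent, (fun p : X × X => (f p.1, f p.2)) '' U ∈ CY.ent)
    (hbornological : ∀ B ∈ BX, f '' B ∈ BY)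
    (hlocfin : ∀ y : Y, ∀ B ∈ BX, (f ⁻¹' {y} ∩ B).Finite)
    (P P' : Set (X × X))
    (hP : IsConnection CX.ent CY.ent Z f P)
    (hP' : IsConnection CX.ent CY.ent Z f P') :
    ∀ V ∈ CY.ent, ∃ A ∈ Z,
      P ∩ {p : X × X | (f p.1, f p.2) ∈ V ∧ f p.2 ∉ A} =
      P' ∩ {p : X × X | (f p.1, f p.2) ∈ V ∧ f p.2 ∉ A} := by

  intro V hV
  obtain ⟨A1, hA1, _, hU1⟩ := hP.1 V hV
  obtain ⟨A2, hA2, hsub2⟩ := hP'.2 _ hU1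
  obtain ⟨A1', hA1', _, hU1'⟩ := hP'.1 V hV
  obtain ⟨A2', hA2', hsub2'⟩ := hP.2 _ hU1'
  obtain ⟨D1, hD1, h11, h12⟩ := hZ.directed A1 hA1 A2 hA2
  obtain ⟨D2, hD2, h21, h22⟩ := hZ.directed A1' hA1' A2' hA2'
  obtain ⟨D, hD, hD1s, hD2s⟩ := hZ.directed D1 hD1 D2 hD2
  refine ⟨D, hD, ?_⟩
  ext p
  constructor
  · rintro ⟨hp, hv, hna⟩
    refine ⟨hsub2 ⟨⟨hp, hv, fun h => hna (hD1s (h11 h))⟩,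
      fun h => hna (hD1s (h12 h))⟩, hv, hna⟩
  · rintro ⟨hp, hv, hna⟩
    refine ⟨hsub2' ⟨⟨hp, hv, fun h => hna (hD2s (h21 h))⟩,
      fun h => hna (hD2s (h22 h))⟩, hv, hna⟩
end

section
/- Let f : X → Y be a branched coarse covering relative to the trivial big family (∅) (consisting only of the empty set). Then for every coarse component X_i of X, the restriction f|_{X_i} : X_i → Y_{f(X_i)} is a bijection onto the coarse component of Y containing f(X_i), and this bijection is an isomorphism of coarse spaces (both it and its inverse are controlled). Moreover the coarse structure of X is generated by the entourages f^{-1}(V) ∩ P, where V ranges over the coarse entourages of Y and P is the connection. -/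
/-- A branched coarse covering relative to the trivial big family `(∅)` restricts to an
isomorphism of coarse spaces from each coarse component of `X` onto the corresponding
coarse component of `Y`, and the coarse structure of `X` is generated by the entourages
`f⁻¹(V) ∩ P`. -/
theorem stmt_3 {X Y : Type*} (CX : CoarseStructureOn X) (CY : CoarseStructureOn Y)
    (BX : Set (Set X)) (BY : Set (Set Y))
    (f : X → Y) (P : Set (X × X))
    (hcontrolled : ∀ U ∈ CX.ent, (fun p : X × X => (f p.1, f p.2)) '' U ∈ CY.ent)
    (hbornological : ∀ B ∈ BX, f '' B ∈ BY)
    (hlocfin : ∀ y : Y, ∀ B ∈ BX, (f ⁻¹' {y} ∩ B).Finite)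
    (hlift : ∀ V ∈ CY.ent, ∀ y' y : Y, (y', y) ∈ V → ∀ x : X, f x = y →
      ∃! x' : X, f x' = y' ∧ (x', x) ∈ P)
    (hentP : ∀ V ∈ CY.ent, (P ∩ {p : X × X | (f p.1, f p.2) ∈ V}) ∈ CX.ent)
    (hsub : ∀ U ∈ CX.ent, U ⊆ P) :
    -- `f` restricts to a bijection from each coarse component onto the coarse component
    -- of the image
    (∀ x₀ : X, Set.BijOn f {x : X | ∃ U ∈ CX.ent, (x, x₀) ∈ U}
        {y : Y | ∃ V ∈ CY.ent, (y, f x₀) ∈ V}) ∧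
    -- the restricted bijection is controlled
    (∀ x₀ : X, ∀ U ∈ CX.ent,
      (fun p : X × X => (f p.1, f p.2)) ''
        (U ∩ {p : X × X | (∃ W ∈ CX.ent, (p.1, x₀) ∈ W) ∧ ∃ W ∈ CX.ent, (p.2, x₀) ∈ W})
        ∈ CY.ent) ∧
    -- its inverse is controlled
    (∀ x₀ : X, ∀ V ∈ CY.ent,
      {p : X × X | (∃ W ∈ CX.ent, (p.1, x₀) ∈ W) ∧ (∃ W ∈ CX.ent, (p.2, x₀) ∈ W) ∧
        (f p.1, f p.2) ∈ V} ∈ CX.ent) ∧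
    -- the coarse structure of `X` is generated by the entourages `f⁻¹(V) ∩ P`
    (∀ U ∈ CX.ent, ∃ V ∈ CY.ent, U ⊆ {p : X × X | (f p.1, f p.2) ∈ V} ∩ P) ∧
    (∀ V ∈ CY.ent, {p : X × X | (f p.1, f p.2) ∈ V} ∩ P ∈ CX.ent) := by
  refine ⟨?_, ?_, ?_, ?_, ?_⟩
  · intro x₀
    refine ⟨?_, ?_, ?_⟩
    · rintro x ⟨U, hU, hx⟩
      exact ⟨_, hcontrolled U hU, ⟨(x, x₀), hx, rfl⟩⟩
    · rintro x ⟨U, hU, hx⟩ x' ⟨U', hU', hx'⟩ hfe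
      have hP : (x, x') ∈ P :=
        hsub _ (CX.comp_mem hU (CX.inv_mem hU')) ⟨x₀, hx, ⟨(x', x₀), hx', rfl⟩⟩
      have hP' : (x', x') ∈ P := hsub _ CX.diag_mem rfl
      obtain ⟨z, hz, huniq⟩ := hlift _ CY.diag_mem (f x) (f x') hfe x' rfl
      exact (huniq x ⟨rfl, hP⟩).trans (huniq x' ⟨hfe.symm, hP'⟩).symm
    · rintro y ⟨V, hV, hy⟩
      obtain ⟨x, ⟨hfx, hxP⟩, -⟩ := hlift V hV y (f x₀) hy x₀ rfl
      exact ⟨x, ⟨_, hentP V hV, ⟨hxP, by simpa [hfx] using hy⟩⟩, hfx⟩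
  · intro x₀ U hU
    exact CY.subset_mem (hcontrolled U hU) (Set.image_mono Set.inter_subset_left)
  · intro x₀ V hV
    refine CX.subset_mem (hentP V hV) ?_
    rintro ⟨a, b⟩ ⟨⟨W₁, hW₁, ha⟩, ⟨W₂, hW₂, hb⟩, hf⟩
    exact ⟨hsub _ (CX.comp_mem hW₁ (CX.inv_mem hW₂)) ⟨x₀, ha, ⟨(b, x₀), hb, rfl⟩⟩, hf⟩
  · intro U hU
    exact ⟨_, hcontrolled U hU, fun p hp => ⟨⟨p, hp, rfl⟩, hsub U hU hp⟩⟩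
  · intro V hV
    exact CX.subset_mem (hentP V hV) (fun p hp => ⟨hp.2, hp.1⟩)
end

section
/- Let f : X → Y be a branched coarse covering relative to a big family 𝒵 on Y, and let h : Y' → Y be a morphism of bornological coarse spaces. Form the pullback X' := X ×_Y Y' in coarse spaces (underlying set the fibre product, coarse structure the pullback), and equip X' with the bornology generated by preimages under the projection g : X' → X of bounded sets of X. Then f' : X' → Y' is a branched coarse covering relative to the big family 𝒵' := h^{-1}(𝒵), with connection P' := (g × g)^{-1}(P) for a connection P of f. -/
/-- A bornology, given as the ideal of bounded subsets. -/
structure IsBornology {X : Type*} (B : Set (Set X)) : Prop where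
  subset_mem : ∀ ⦃s t : Set X⦄, t ∈ B → s ⊆ t → s ∈ B
  union_mem : ∀ ⦃s t : Set X⦄, s ∈ B → t ∈ B → s ∪ t ∈ B
  singleton_mem : ∀ x : X, {x} ∈ B

/-- Pullback of a coarse structure along a map. -/
def CoarseStructureOn.comap {α β : Type*} (C : CoarseStructureOn β) (k : α → β) :
    CoarseStructureOn α where
  ent := {U | (fun p : α × α => (k p.1, k p.2)) '' U ∈ C.ent}
  diag_mem := C.subset_mem C.diag_mem (by
    rintro _ ⟨⟨a, b⟩, hab, rfl⟩
    simp only [Set.mem_setOf_eq] at hab ⊢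
    exact congrArg k hab)
  subset_mem := fun V U hU hVU => C.subset_mem hU (Set.image_mono hVU)
  union_mem := fun U V hU hV => by
    simp only [Set.mem_setOf_eq, Set.image_union]
    exact C.union_mem hU hV
  inv_mem := fun U hU => by
    have key : (fun p : α × α => (k p.1, k p.2)) '' (Prod.swap '' U)
        = Prod.swap '' ((fun p : α × α => (k p.1, k p.2)) '' U) := by
      rw [Set.image_image, Set.image_image]
      rfl
    simp only [Set.mem_setOf_eq]
    rw [key]
    exact C.inv_mem hU
  comp_mem := fun U V hU hV => by
    refine C.subset_mem (C.comp_mem hU hV) ?_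
    rintro _ ⟨p, ⟨y, hy1, hy2⟩, rfl⟩
    exact ⟨k y, ⟨(p.1, y), hy1, rfl⟩, ⟨(y, p.2), hy2, rfl⟩⟩

/-- Intersection of two coarse structures. -/
def CoarseStructureOn.inf2 {α : Type*} (C D : CoarseStructureOn α) : CoarseStructureOn α where
  ent := {U | U ∈ C.ent ∧ U ∈ D.ent}
  diag_mem := ⟨C.diag_mem, D.diag_mem⟩
  subset_mem := fun _ _ hU hVU => ⟨C.subset_mem hU.1 hVU, D.subset_mem hU.2 hVU⟩
  union_mem := fun _ _ hU hV => ⟨C.union_mem hU.1 hV.1, D.union_mem hU.2 hV.2⟩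
  inv_mem := fun _ hU => ⟨C.inv_mem hU.1, D.inv_mem hU.2⟩
  comp_mem := fun _ _ hU hV => ⟨C.comp_mem hU.1 hV.1, D.comp_mem hU.2 hV.2⟩

/-- Base change of a branched coarse covering along a morphism `h : Y' → Y` of
bornological coarse spaces: the pullback `X' = X ×_Y Y'` (with the pullback coarse
structure and the bornology generated by `g`-preimages of bounded sets) is a branched
coarse covering over `Y'` relative to `h⁻¹(𝒵)`, with connection `(g × g)⁻¹(P)`. -/
theorem stmt_4 {X Y Y' : Type*}
    (CX : CoarseStructureOn X) (CY : CoarseStructureOn Y) (CY' : CoarseStructureOn Y')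
    (BX : Set (Set X)) (BY : Set (Set Y)) (BY' : Set (Set Y'))
    (hBX : IsBornology BX) (hBY : IsBornology BY) (hBY' : IsBornology BY')
    (Z : Set (Set Y)) (hZ : IsBigFamily CY Z)
    (f : X → Y) (h : Y' → Y)
    -- `f` is a branched coarse covering relative to `Z` with connection `P`
    (hf_controlled : ∀ U ∈ CX.ent, (fun p : X × X => (f p.1, f p.2)) '' U ∈ CY.ent)
    (hf_born : ∀ B ∈ BX, f '' B ∈ BY)
    (hf_locfin : ∀ y : Y, ∀ B ∈ BX, (f ⁻¹' {y} ∩ B).Finite)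
    (P : Set (X × X)) (hP : IsConnection CX.ent CY.ent Z f P)
    -- `h` is a morphism of bornological coarse spaces (controlled and proper)
    (hh_controlled : ∀ U ∈ CY'.ent, (fun p : Y' × Y' => (h p.1, h p.2)) '' U ∈ CY.ent)
    (hh_proper : ∀ B ∈ BY, h ⁻¹' B ∈ BY') :
    -- the pullback data
    ∀ g : {p : X × Y' // f p.1 = h p.2} → X, g = (fun q => q.1.1) →
    ∀ f' : {p : X × Y' // f p.1 = h p.2} → Y', f' = (fun q => q.1.2) →
    -- the pullback coarse structure: entourages are those whose images under both
    -- projections are entourages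
    ∀ entX' : Set (Set ({p : X × Y' // f p.1 = h p.2} × {p : X × Y' // f p.1 = h p.2})),
      entX' = {U' | (fun p => (g p.1, g p.2)) '' U' ∈ CX.ent ∧
                    (fun p => (f' p.1, f' p.2)) '' U' ∈ CY'.ent} →
    -- the bornology generated by `g`-preimages of bounded sets
    ∀ BX' : Set (Set {p : X × Y' // f p.1 = h p.2}),
      BX' = {B' | ∃ B ∈ BX, B' ⊆ g ⁻¹' B} →
    -- the pulled-back big family
    ∀ Z' : Set (Set Y'), Z' = {A' | ∃ A ∈ Z, A' = h ⁻¹' A} →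
    -- conclusions: `f'` is a branched coarse covering relative to `Z'` with
    -- connection `(g × g)⁻¹ P`
    (∃ CX' : CoarseStructureOn {p : X × Y' // f p.1 = h p.2}, CX'.ent = entX') ∧
    IsBornology BX' ∧
    IsBigFamily CY' Z' ∧
    (∀ U' ∈ entX', (fun p : _ × _ => (f' p.1, f' p.2)) '' U' ∈ CY'.ent) ∧
    (∀ B' ∈ BX', f' '' B' ∈ BY') ∧
    (∀ y' : Y', ∀ B' ∈ BX', (f' ⁻¹' {y'} ∩ B').Finite) ∧
    IsConnection entX' CY'.ent Z' f' {p | (g p.1, g p.2) ∈ P} := by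
  intro g hg f' hf' entX' hent BX' hBX' Z' hZ'
  subst hg hf' hent hBX' hZ'
  refine ⟨?_, ?_, ?_, ?_, ?_, ?_, ?_, ?_⟩
  · refine ⟨(CX.comap fun q : {p : X × Y' // f p.1 = h p.2} => q.1.1).inf2
        (CY'.comap fun q : {p : X × Y' // f p.1 = h p.2} => q.1.2), rfl⟩
  · refine ⟨?_, ?_, ?_⟩
    · rintro s t ⟨B, hB, htB⟩ hst
      exact ⟨B, hB, hst.trans htB⟩
    · rintro s t ⟨B, hB, hsB⟩ ⟨C, hC, htC⟩
      exact ⟨B ∪ C, hBX.union_mem hB hC,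
        Set.union_subset (hsB.trans (Set.preimage_mono Set.subset_union_left))
          (htC.trans (Set.preimage_mono Set.subset_union_right))⟩
    · intro q
      exact ⟨{q.1.1}, hBX.singleton_mem _, Set.singleton_subset_iff.2 rfl⟩
  · refine ⟨?_, ?_, ?_⟩
    · obtain ⟨A, hA⟩ := hZ.nonempty
      exact ⟨h ⁻¹' A, A, hA, rfl⟩
    · rintro _ ⟨A, hA, rfl⟩ _ ⟨B, hB, rfl⟩
      obtain ⟨D, hD, hAD, hBD⟩ := hZ.directed A hA B hB
      exact ⟨h ⁻¹' D, ⟨D, hD, rfl⟩, Set.preimage_mono hAD, Set.preimage_mono hBD⟩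
    · rintro V' hV' _ ⟨A, hA, rfl⟩
      obtain ⟨B, hB, hAB⟩ := hZ.big _ (hh_controlled V' hV') A hA
      refine ⟨h ⁻¹' B, ⟨B, hB, rfl⟩, ?_⟩
      rintro y' ⟨a', ha', hy'a'⟩
      exact hAB ⟨h a', ha', ⟨(y', a'), hy'a', rfl⟩⟩
  · exact fun U' hU' => hU'.2
  · rintro B' ⟨B, hB, hsub⟩
    refine hBY'.subset_mem (hh_proper _ (hf_born B hB)) ?_
    rintro _ ⟨q, hq, rfl⟩
    exact ⟨q.1.1, hsub hq, q.2⟩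
  · rintro y' B' ⟨B, hB, hsub⟩
    have hfin := hf_locfin (h y') B hB
    refine Set.Finite.of_finite_image (f := fun q => q.1.1) (hfin.subset ?_) ?_
    · rintro _ ⟨q, ⟨hq1, hq2⟩, rfl⟩
      refine ⟨?_, hsub hq2⟩
      have : q.1.2 = y' := hq1
      simp only [Set.mem_preimage, Set.mem_singleton_iff]
      rw [q.2, this]
    · rintro q1 ⟨hq11, _⟩ q2 ⟨hq21, _⟩ hgq
      have h1 : q1.1.2 = y' := hq11
      have h2 : q2.1.2 = y' := hq21
      exact Subtype.ext (Prod.ext hgq (h1.trans h2.symm))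
  · -- connection, first part
    intro V' hV'
    obtain ⟨A, hA, hlift, hentP⟩ := hP.1 _ (hh_controlled V' hV')
    refine ⟨h ⁻¹' A, ⟨A, hA, rfl⟩, ?_, ?_⟩
    · intro y1 y2 hV hy2 q hq
      have hVy : (h y1, h y2) ∈ (fun p : Y' × Y' => (h p.1, h p.2)) '' V' :=
        ⟨(y1, y2), hV, rfl⟩
      have hfx : f q.1.1 = h y2 := q.2.trans (congrArg h hq)
      obtain ⟨x', ⟨hx'1, hx'2⟩, hx'uniq⟩ := hlift (h y1) (h y2) hVy hy2 q.1.1 hfx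
      refine ⟨⟨(x', y1), hx'1⟩, ⟨rfl, hx'2⟩, ?_⟩
      rintro q'' ⟨hq''1, hq''2⟩
      have : q''.1.1 = x' := hx'uniq q''.1.1 ⟨q''.2.trans (congrArg h hq''1), hq''2⟩
      exact Subtype.ext (Prod.ext this hq''1)
    · refine ⟨CX.subset_mem hentP ?_, CY'.subset_mem hV' ?_⟩
      · rintro _ ⟨p, hp, rfl⟩
        obtain ⟨hpP, hpV, hpA⟩ := hp
        refine ⟨hpP, ⟨(p.1.1.2, p.2.1.2), hpV, Prod.ext p.1.2.symm p.2.2.symm⟩, ?_⟩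
        rw [p.2.2]
        exact hpA
      · rintro _ ⟨p, hp, rfl⟩
        exact hp.2.1
  · -- connection, second part
    intro U' hU'
    obtain ⟨A, hA, hUP⟩ := hP.2 _ hU'.1
    refine ⟨h ⁻¹' A, ⟨A, hA, rfl⟩, ?_⟩
    rintro p ⟨hpU, hpA⟩
    exact hUP ⟨⟨p, hpU, rfl⟩, fun hc => hpA (show h (p.2 : X × Y').2 ∈ A from p.2.2 ▸ hc)⟩
end

section
/- Let f : X → Y be a branched coarse covering relative to the big family 𝒵. If (Y, 𝒵) eventually has asymptotic dimension ≤ n, then (X, f^{-1}(𝒵)) eventually has asymptotic dimension ≤ n. More precisely: if for every coarse entourage V of Y there is a member Z of 𝒵 and a family 𝒲 of subsets covering Y \ Z with V a Lebesgue entourage of 𝒲, with bound bd(𝒲) := ∪_{W∈𝒲} W × W a coarse entourage of Y, and with multiplicity at most n+1, then for every coarse entourage U of X there is a member Z of 𝒵 and a family of subsets covering X \ f^{-1}(Z) with U a Lebesgue entourage, coarse bound, and multiplicity at most n+1. -/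
/-- If the target of a branched coarse covering eventually has asymptotic dimension `≤ n`
relative to the big family, then so does the source relative to the preimage family. -/
theorem stmt_5 {X Y : Type*} (CX : CoarseStructureOn X) (CY : CoarseStructureOn Y)
    (BX : Set (Set X)) (BY : Set (Set Y))
    (Z : Set (Set Y)) (hZ : IsBigFamily CY Z)
    (f : X → Y) (n : ℕ)
    (hcontrolled : ∀ U ∈ CX.ent, (fun p : X × X => (f p.1, f p.2)) '' U ∈ CY.ent)
    (hbornological : ∀ B ∈ BX, f '' B ∈ BY)
    (hlocfin : ∀ y : Y, ∀ B ∈ BX, (f ⁻¹' {y} ∩ B).Finite)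
    (P : Set (X × X)) (hP : IsConnection CX.ent CY.ent Z f P)
    -- `(Y, 𝒵)` eventually has asymptotic dimension `≤ n`
    (hdimY : ∀ V ∈ CY.ent, ∃ A ∈ Z, ∃ 𝒲 : Set (Set Y),
      (∀ y : Y, y ∉ A → ∃ W ∈ 𝒲, y ∈ W) ∧
      (∀ B : Set Y, (∀ b ∈ B, b ∉ A) → (∀ b ∈ B, ∀ b' ∈ B, (b, b') ∈ V) →
        ∃ W ∈ 𝒲, B ⊆ W) ∧
      {p : Y × Y | ∃ W ∈ 𝒲, p.1 ∈ W ∧ p.2 ∈ W} ∈ CY.ent ∧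
      (∀ y : Y, {W ∈ 𝒲 | y ∈ W}.Finite ∧ {W ∈ 𝒲 | y ∈ W}.ncard ≤ n + 1)) :
    -- `(X, f⁻¹(𝒵))` eventually has asymptotic dimension `≤ n`
    ∀ U ∈ CX.ent, ∃ A ∈ Z, ∃ 𝒲 : Set (Set X),
      (∀ x : X, f x ∉ A → ∃ W ∈ 𝒲, x ∈ W) ∧
      (∀ B : Set X, (∀ b ∈ B, f b ∉ A) → (∀ b ∈ B, ∀ b' ∈ B, (b, b') ∈ U) →
        ∃ W ∈ 𝒲, B ⊆ W) ∧
      {p : X × X | ∃ W ∈ 𝒲, p.1 ∈ W ∧ p.2 ∈ W} ∈ CX.ent ∧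
      (∀ x : X, {W ∈ 𝒲 | x ∈ W}.Finite ∧ {W ∈ 𝒲 | x ∈ W}.ncard ≤ n + 1) := by
  intro U hU
  -- push forward the entourage
  have hV : (fun p : X × X => (f p.1, f p.2)) '' U ∈ CY.ent := hcontrolled U hU
  obtain ⟨AY, hAY, 𝒲Y, hcov, hleb, hbd, hmul⟩ := hdimY _ hV
  -- the bound entourage of the Y-family
  set Vb : Set (Y × Y) := {p : Y × Y | ∃ W ∈ 𝒲Y, p.1 ∈ W ∧ p.2 ∈ W} with hVbdef
  obtain ⟨A1, hA1, -, hEent⟩ := hP.1 Vb hbd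
  set E : Set (X × X) := P ∩ {p : X × X | (f p.1, f p.2) ∈ Vb ∧ f p.2 ∉ A1} with hEdef
  have hEswap : Prod.swap '' E ∈ CX.ent := CX.inv_mem hEent
  set E' : Set (X × X) := E ∪ Prod.swap '' E with hE'def
  have hE' : E' ∈ CX.ent := CX.union_mem hEent hEswap
  set E2 : Set (X × X) := {p : X × X | ∃ y, (p.1, y) ∈ E' ∧ (y, p.2) ∈ E'} with hE2def
  have hE2 : E2 ∈ CX.ent := CX.comp_mem hE' hE'
  set E3 : Set (X × X) := {p : X × X | ∃ y, (p.1, y) ∈ E' ∧ (y, p.2) ∈ E2} with hE3def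
  have hE3 : E3 ∈ CX.ent := CX.comp_mem hE' hE2
  obtain ⟨A3, hA3, hP3⟩ := hP.2 E3 hE3
  obtain ⟨Ad, hAd, hPd⟩ := hP.2 _ CX.diag_mem
  obtain ⟨AU, hAU, hPU⟩ := hP.2 U hU
  -- combine the members of Z
  obtain ⟨B1, hB1, hs1, hs2⟩ := hZ.directed AY hAY A1 hA1
  obtain ⟨B2, hB2, hs3, hs4⟩ := hZ.directed B1 hB1 A3 hA3
  obtain ⟨B3, hB3, hs5, hs6⟩ := hZ.directed B2 hB2 Ad hAd
  obtain ⟨A, hAZ, hs7, hs8⟩ := hZ.directed B3 hB3 AU hAU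
  have hAYA : AY ⊆ A := fun y hy => hs7 (hs5 (hs3 (hs1 hy)))
  have hA1A : A1 ⊆ A := fun y hy => hs7 (hs5 (hs3 (hs2 hy)))
  have hA3A : A3 ⊆ A := fun y hy => hs7 (hs5 (hs4 hy))
  have hAdA : Ad ⊆ A := fun y hy => hs7 (hs6 hy)
  have hAUA : AU ⊆ A := hs8
  -- the sheets
  set sheet : Set Y → X → Set X :=
    fun W x₀ => {x : X | f x ∈ W \ A ∧ (x, x₀) ∈ P} with hsheetdef
  -- key : pairs in P with both images in a member of 𝒲Y, second outside A, lie in E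
  have keyE : ∀ {W : Set Y}, W ∈ 𝒲Y → ∀ {a b : X}, f a ∈ W → f b ∈ W \ A →
      (a, b) ∈ P → (a, b) ∈ E := by
    intro W hW a b ha hb hab
    exact ⟨hab, ⟨W, hW, ha, hb.1⟩, fun h => hb.2 (hA1A h)⟩
  -- sheets through a common point coincide
  have sheet_sub : ∀ {W : Set Y}, W ∈ 𝒲Y → ∀ {x₀ x₀' x : X},
      f x₀ ∈ W \ A → f x₀' ∈ W \ A → x ∈ sheet W x₀ → x ∈ sheet W x₀' →
      sheet W x₀ ⊆ sheet W x₀' := by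
    intro W hW x₀ x₀' x h0 h0' hx hx' x' hx'S
    refine ⟨hx'S.1, ?_⟩
    refine hP3 ⟨⟨x₀, ?_, x, ?_, ?_⟩, fun h => h0'.2 (hA3A h)⟩
    · exact Or.inl (keyE hW hx'S.1.1 h0 hx'S.2)
    · exact Or.inr ⟨(x, x₀), keyE hW hx.1.1 h0 hx.2, rfl⟩
    · exact Or.inl (keyE hW hx'.1.1 h0' hx'.2)
  -- the family on X
  refine ⟨A, hAZ, insert ∅ {S : Set X | ∃ W ∈ 𝒲Y, ∃ x₀ : X,
    f x₀ ∈ W \ A ∧ S = sheet W x₀}, ?_, ?_, ?_, ?_⟩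
  · -- cover
    intro x hx
    obtain ⟨W, hW, hxW⟩ := hcov (f x) (fun h => hx (hAYA h))
    have hxx : (x, x) ∈ P := hPd ⟨rfl, fun h => hx (hAdA h)⟩
    exact ⟨sheet W x, Or.inr ⟨W, hW, x, ⟨hxW, hx⟩, rfl⟩, ⟨hxW, hx⟩, hxx⟩
  · -- Lebesgue
    intro B hB1' hB2'
    rcases B.eq_empty_or_nonempty with rfl | ⟨b₀, hb₀⟩
    · exact ⟨∅, Or.inl rfl, Set.empty_subset _⟩
    have hfB : ∃ W ∈ 𝒲Y, f '' B ⊆ W := by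
      refine hleb (f '' B) ?_ ?_
      · rintro y ⟨b, hb, rfl⟩
        exact fun h => hB1' b hb (hAYA h)
      · rintro y ⟨b, hb, rfl⟩ y' ⟨b', hb', rfl⟩
        exact ⟨(b, b'), hB2' b hb b' hb', rfl⟩
    obtain ⟨W, hW, hsub⟩ := hfB
    have hb₀W : f b₀ ∈ W \ A := ⟨hsub ⟨b₀, hb₀, rfl⟩, hB1' b₀ hb₀⟩
    refine ⟨sheet W b₀, Or.inr ⟨W, hW, b₀, hb₀W, rfl⟩, fun b hb => ?_⟩
    refine ⟨⟨hsub ⟨b, hb, rfl⟩, hB1' b hb⟩, ?_⟩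
    exact hPU ⟨hB2' b hb b₀ hb₀, fun h => hB1' b₀ hb₀ (hAUA h)⟩
  · -- bound
    refine CX.subset_mem (CX.comp_mem hEent hEswap) ?_
    rintro ⟨x, x'⟩ ⟨S, hS, hxS, hx'S⟩
    rcases hS with rfl | ⟨W, hW, x₀, h0, rfl⟩
    · exact absurd hxS (Set.notMem_empty x)
    exact ⟨x₀, keyE hW hxS.1.1 h0 hxS.2, ⟨(x', x₀), keyE hW hx'S.1.1 h0 hx'S.2, rfl⟩⟩
  · -- multiplicity
    intro x
    obtain ⟨hTfin, hTcard⟩ := hmul (f x)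
    set Q : Set X → Prop := fun S => ∃ W ∈ 𝒲Y, ∃ x₀ : X, f x₀ ∈ W \ A ∧ S = sheet W x₀
      with hQdef
    classical
    set g : Set X → Set Y := fun S => if h : Q S then h.choose else ∅ with hgdef
    set s : Set (Set X) := {S | S ∈ insert ∅ {S : Set X | Q S} ∧ x ∈ S} with hsdef
    have hQs : ∀ S ∈ s, Q S := by
      rintro S ⟨hS, hxS⟩
      rcases hS with rfl | hS
      · exact absurd hxS (Set.notMem_empty x)
      · exact hS
    have hgspec : ∀ S ∈ s, g S ∈ 𝒲Y ∧ ∃ x₀ : X, f x₀ ∈ g S \ A ∧ S = sheet (g S) x₀ := by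
      intro S hS
      have h := hQs S hS
      simp only [hgdef, dif_pos h]
      exact h.choose_spec
    have hmaps : ∀ S ∈ s, g S ∈ {W | W ∈ 𝒲Y ∧ f x ∈ W} := by
      intro S hS
      obtain ⟨hWY, x₀, h0, hSeq⟩ := hgspec S hS
      have hxS : x ∈ sheet (g S) x₀ := hSeq ▸ hS.2
      exact ⟨hWY, hxS.1.1⟩
    have hinj : Set.InjOn g s := by
      intro S hS S' hS' hgg
      obtain ⟨hWY, x₀, h0, hSeq⟩ := hgspec S hS
      obtain ⟨hWY', x₀', h0', hSeq'⟩ := hgspec S' hS'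
      rw [hgg] at hSeq h0
      have hxS : x ∈ sheet (g S') x₀ := hSeq ▸ hS.2
      have hxS' : x ∈ sheet (g S') x₀' := hSeq' ▸ hS'.2
      exact hSeq.trans ((Set.Subset.antisymm (sheet_sub hWY' h0 h0' hxS hxS')
        (sheet_sub hWY' h0' h0 hxS' hxS)).trans hSeq'.symm)
    constructor
    · exact Set.Finite.of_finite_image
        (hTfin.subset (by rintro _ ⟨S, hS, rfl⟩; exact hmaps S hS)) hinj
    · exact le_trans (Set.ncard_le_ncard_of_injOn g hmaps hinj hTfin) hTcard
end

section
/- Let H and H' be Hilbert spaces, I an index set, n ∈ ℕ and C ≥ 0. Let (Q_i)_{i∈I} be pairwise orthogonal orthogonal-projections on H, and (P_i)_{i∈I} be orthogonal projections on H' such that for every finite subset F ⊆ I the operator norm of Σ_{i∈F} P_i is at most n. Let (B_i)_{i∈I} be bounded operators H → H' with B_i = P_i ∘ B_i ∘ Q_i and ‖B_i‖ ≤ C for all i. Then for every finite subset F ⊆ I one has ‖Σ_{i∈F} B_i‖ ≤ √n · C. -/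
open scoped InnerProductSpace

/-- Norm estimate for sums of operators with pairwise orthogonal sources and targets of
bounded multiplicity: if the `Q i` are pairwise orthogonal projections, the finite sums of
the projections `P i` have norm at most `n`, and `B i = P i ∘ B i ∘ Q i` with
`‖B i‖ ≤ C`, then `‖∑_{i ∈ F} B i‖ ≤ √n · C`. -/
theorem stmt_7 {H H' : Type*}
    [NormedAddCommGroup H] [InnerProductSpace ℂ H] [CompleteSpace H]
    [NormedAddCommGroup H'] [InnerProductSpace ℂ H'] [CompleteSpace H']
    {I : Type*} (n : ℕ) (C : ℝ) (hC : 0 ≤ C)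
    (Q : I → H →L[ℂ] H) (P : I → H' →L[ℂ] H')
    (hQproj : ∀ i, Q i ∘L Q i = Q i)
    (hQsa : ∀ i, ContinuousLinearMap.adjoint (Q i) = Q i)
    (hQorth : ∀ i j, i ≠ j → Q i ∘L Q j = 0)
    (hPproj : ∀ i, P i ∘L P i = P i)
    (hPsa : ∀ i, ContinuousLinearMap.adjoint (P i) = P i)
    (hPbound : ∀ F : Finset I, ‖∑ i ∈ F, P i‖ ≤ (n : ℝ))
    (B : I → H →L[ℂ] H')
    (hB : ∀ i, B i = P i ∘L B i ∘L Q i)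
    (hBnorm : ∀ i, ‖B i‖ ≤ C) :
    ∀ F : Finset I, ‖∑ i ∈ F, B i‖ ≤ Real.sqrt n * C := by
  intro F
  have hsC : 0 ≤ Real.sqrt n * C := mul_nonneg (Real.sqrt_nonneg _) hC
  set T : H →L[ℂ] H' := ∑ i ∈ F, B i with hT
  -- adjoint identity : (B i)* = Q i ∘L (B i)* ∘L P i
  have hBadj : ∀ i, ContinuousLinearMap.adjoint (B i)
      = Q i ∘L ContinuousLinearMap.adjoint (B i) ∘L P i := by
    intro i
    conv_lhs => rw [hB i]
    simp only [ContinuousLinearMap.adjoint_comp, hQsa, hPsa]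
    rfl
  -- it suffices to bound the adjoint
  rw [← ContinuousLinearMap.adjoint.norm_map T]
  refine ContinuousLinearMap.opNorm_le_bound _ hsC fun x => ?_
  set v : I → H := fun i => ContinuousLinearMap.adjoint (B i) x with hv
  have hadjsum : ContinuousLinearMap.adjoint T x = ∑ i ∈ F, v i := by
    simp [hT, map_sum, hv]
  -- orthogonality of the v i
  have horth : ∀ i ∈ F, ∀ j ∈ F, i ≠ j → (⟪v i, v j⟫_ℂ) = 0 := by
    intro i _ j _ hij
    have hi : v i = Q i (ContinuousLinearMap.adjoint (B i) (P i x)) := by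
      show ContinuousLinearMap.adjoint (B i) x = _
      conv_lhs => rw [hBadj i]
      rfl
    have hj : v j = Q j (ContinuousLinearMap.adjoint (B j) (P j x)) := by
      show ContinuousLinearMap.adjoint (B j) x = _
      conv_lhs => rw [hBadj j]
      rfl
    rw [hi, hj]
    rw [← hQsa i, ContinuousLinearMap.adjoint_inner_left]
    have : Q i (Q j (ContinuousLinearMap.adjoint (B j) (P j x)))
        = (Q i ∘L Q j) (ContinuousLinearMap.adjoint (B j) (P j x)) := rfl
    rw [this, hQorth i j hij]
    simp
  -- Pythagoras
  have hpyth : ‖∑ i ∈ F, v i‖ ^ 2 = ∑ i ∈ F, ‖v i‖ ^ 2 := by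
    have h1 : (⟪∑ i ∈ F, v i, ∑ j ∈ F, v j⟫_ℂ) = ∑ i ∈ F, ⟪v i, v i⟫_ℂ := by
      rw [sum_inner]
      refine Finset.sum_congr rfl fun i hi => ?_
      rw [inner_sum, Finset.sum_eq_single i (fun j hj hji => horth i hi j hj (Ne.symm hji))
        (fun h => absurd hi h)]
    rw [InnerProductSpace.norm_sq_eq_re_inner (𝕜 := ℂ), h1, map_sum]
    exact Finset.sum_congr rfl fun i _ => (InnerProductSpace.norm_sq_eq_re_inner (𝕜 := ℂ) (v i)).symm
  -- norm bound on each v i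
  have hvle : ∀ i, ‖v i‖ ^ 2 ≤ C ^ 2 * ‖P i x‖ ^ 2 := by
    intro i
    have hPP : P i (P i x) = P i x := by
      conv_rhs => rw [← hPproj i]
      rfl
    have h1 : v i = ContinuousLinearMap.adjoint (B i) (P i x) := by
      show ContinuousLinearMap.adjoint (B i) x = _
      conv_lhs => rw [hBadj i]
      conv_rhs => rw [hBadj i]
      show Q i (ContinuousLinearMap.adjoint (B i) (P i x))
          = Q i (ContinuousLinearMap.adjoint (B i) (P i (P i x)))
      rw [hPP]
    have h2 : ‖v i‖ ≤ C * ‖P i x‖ := by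
      rw [h1]
      calc ‖ContinuousLinearMap.adjoint (B i) (P i x)‖
          ≤ ‖ContinuousLinearMap.adjoint (B i)‖ * ‖P i x‖ := (ContinuousLinearMap.adjoint (B i)).le_opNorm _
        _ ≤ C * ‖P i x‖ := by
            apply mul_le_mul_of_nonneg_right _ (norm_nonneg _)
            rw [ContinuousLinearMap.adjoint.norm_map]; exact hBnorm i
    calc ‖v i‖ ^ 2 ≤ (C * ‖P i x‖) ^ 2 := by
          apply pow_le_pow_left₀ (norm_nonneg _) h2
      _ = C ^ 2 * ‖P i x‖ ^ 2 := by ring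
  -- sum of ‖P i x‖² bound
  have hPsum : ∑ i ∈ F, ‖P i x‖ ^ 2 ≤ (n : ℝ) * ‖x‖ ^ 2 := by
    have hPx : ∀ i, ‖P i x‖ ^ 2 = RCLike.re (⟪x, P i x⟫_ℂ) := by
      intro i
      rw [InnerProductSpace.norm_sq_eq_re_inner (𝕜 := ℂ)]
      congr 1
      calc (⟪P i x, P i x⟫_ℂ) = ⟪x, ContinuousLinearMap.adjoint (P i) (P i x)⟫_ℂ :=
            (ContinuousLinearMap.adjoint_inner_right (P i) x (P i x)).symm
        _ = ⟪x, (P i ∘L P i) x⟫_ℂ := by rw [hPsa i]; rfl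
        _ = ⟪x, P i x⟫_ℂ := by rw [hPproj i]
    calc ∑ i ∈ F, ‖P i x‖ ^ 2 = RCLike.re (⟪x, (∑ i ∈ F, P i) x⟫_ℂ) := by
          simp only [hPx]
          rw [ContinuousLinearMap.sum_apply, inner_sum, map_sum]
      _ ≤ ‖(⟪x, (∑ i ∈ F, P i) x⟫_ℂ)‖ := RCLike.re_le_norm _
      _ ≤ ‖x‖ * ‖(∑ i ∈ F, P i) x‖ := norm_inner_le_norm _ _
      _ ≤ ‖x‖ * (‖∑ i ∈ F, P i‖ * ‖x‖) :=
          mul_le_mul_of_nonneg_left ((∑ i ∈ F, P i).le_opNorm x) (norm_nonneg _)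
      _ ≤ ‖x‖ * ((n : ℝ) * ‖x‖) := by
          apply mul_le_mul_of_nonneg_left _ (norm_nonneg _)
          exact mul_le_mul_of_nonneg_right (hPbound F) (norm_nonneg _)
      _ = (n : ℝ) * ‖x‖ ^ 2 := by ring
  -- put everything together
  have hsq : ‖ContinuousLinearMap.adjoint T x‖ ^ 2 ≤ (Real.sqrt n * C * ‖x‖) ^ 2 := by
    rw [hadjsum, hpyth]
    calc ∑ i ∈ F, ‖v i‖ ^ 2 ≤ ∑ i ∈ F, C ^ 2 * ‖P i x‖ ^ 2 :=
          Finset.sum_le_sum fun i _ => hvle i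
      _ = C ^ 2 * ∑ i ∈ F, ‖P i x‖ ^ 2 := by rw [Finset.mul_sum]
      _ ≤ C ^ 2 * ((n : ℝ) * ‖x‖ ^ 2) :=
          mul_le_mul_of_nonneg_left hPsum (sq_nonneg _)
      _ = (Real.sqrt n * C * ‖x‖) ^ 2 := by
          rw [mul_pow, mul_pow, Real.sq_sqrt (Nat.cast_nonneg n)]; ring
  have := Real.sqrt_le_sqrt hsq
  rwa [Real.sqrt_sq (norm_nonneg _), Real.sqrt_sq (mul_nonneg hsC (norm_nonneg _))] at this
end

section
/- Let H be a Hilbert space, (Q_i)_{i∈I} a family of pairwise orthogonal orthogonal-projections on H whose finite partial sums converge strongly to the identity, and (P_i)_{i∈I} orthogonal projections on H with ‖Σ_{i∈F} P_i‖ ≤ n for every finite F ⊆ I. Let A be a bounded operator on H with P_i A Q_i = A Q_i for every i (i.e. the range of A Q_i is contained in the range of P_i). Then ‖A‖ ≤ √n · sup_{i∈I} ‖A Q_i‖. -/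
open ContinuousLinearMap

local notation "⟪" x ", " y "⟫" => @inner ℂ _ _ x y

section Aux

variable {H : Type*} [NormedAddCommGroup H] [InnerProductSpace ℂ H] [CompleteSpace H]

private lemma sa_inner_move {T : H →L[ℂ] H} (hT : ContinuousLinearMap.adjoint T = T)
    (x y : H) : ⟪T x, y⟫ = ⟪x, T y⟫ := by
  conv_lhs => rw [← hT]
  exact ContinuousLinearMap.adjoint_inner_left T y x

private lemma norm_le_of_mul_self_le {a K : ℝ} (ha : 0 ≤ a) (hK : 0 ≤ K)
    (h : a * a ≤ K * a) : a ≤ K := by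
  rcases eq_or_lt_of_le ha with h0 | h0
  · linarith
  · exact le_of_mul_le_mul_right (by linarith) h0

/-- Norm of a sum of pairwise orthogonal vectors. -/
private lemma norm_sq_sum_of_orth {I : Type*} (F : Finset I) (y : I → H)
    (horth : ∀ i ∈ F, ∀ j ∈ F, i ≠ j → ⟪y i, y j⟫ = 0) :
    ‖∑ i ∈ F, y i‖ ^ 2 = ∑ i ∈ F, ‖y i‖ ^ 2 := by
  rw [← inner_self_eq_norm_sq (𝕜 := ℂ), sum_inner, map_sum]
  refine Finset.sum_congr rfl fun i hi => ?_
  rw [inner_sum, Finset.sum_eq_single_of_mem i hi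
    (fun j hj hji => horth i hi j hj (Ne.symm hji))]
  exact inner_self_eq_norm_sq (y i)

/-- Cauchy–Schwarz for finite real sums, square-root form. -/
private lemma cs_sqrt {I : Type*} (F : Finset I) (a b : I → ℝ) :
    ∑ i ∈ F, a i * b i ≤
      Real.sqrt (∑ i ∈ F, a i ^ 2) * Real.sqrt (∑ i ∈ F, b i ^ 2) := by
  have h := Finset.sum_mul_sq_le_sq_mul_sq F a b
  calc ∑ i ∈ F, a i * b i ≤ |∑ i ∈ F, a i * b i| := le_abs_self _
    _ = Real.sqrt ((∑ i ∈ F, a i * b i) ^ 2) := (Real.sqrt_sq_eq_abs _).symm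
    _ ≤ Real.sqrt ((∑ i ∈ F, a i ^ 2) * ∑ i ∈ F, b i ^ 2) := Real.sqrt_le_sqrt h
    _ = _ := Real.sqrt_mul (Finset.sum_nonneg fun i _ => sq_nonneg _) _

end Aux

/-- Quantitative ghost estimate: if the pairwise orthogonal projections `Q i` sum
strongly to the identity, the finite sums of the projections `P i` have norm at most `n`,
and `P i (A Q i) = A Q i` for all `i`, then `‖A‖ ≤ √n · sup_i ‖A Q i‖`. -/
theorem stmt_8 {H : Type*}
    [NormedAddCommGroup H] [InnerProductSpace ℂ H] [CompleteSpace H]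
    {I : Type*} (n : ℕ)
    (Q P : I → H →L[ℂ] H)
    (hQproj : ∀ i, Q i ∘L Q i = Q i)
    (hQsa : ∀ i, ContinuousLinearMap.adjoint (Q i) = Q i)
    (hQorth : ∀ i j, i ≠ j → Q i ∘L Q j = 0)
    (hQsum : ∀ v : H, Filter.Tendsto (fun F : Finset I => ∑ i ∈ F, Q i v)
      Filter.atTop (nhds v))
    (hPproj : ∀ i, P i ∘L P i = P i)
    (hPsa : ∀ i, ContinuousLinearMap.adjoint (P i) = P i)
    (hPbound : ∀ F : Finset I, ‖∑ i ∈ F, P i‖ ≤ (n : ℝ))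
    (A : H →L[ℂ] H)
    (hA : ∀ i, P i ∘L (A ∘L Q i) = A ∘L Q i)
    (c : ℝ) (hc : 0 ≤ c) (hAc : ∀ i, ‖A ∘L Q i‖ ≤ c) :
    ‖A‖ ≤ Real.sqrt n * c := by
  have hn0 : (0:ℝ) ≤ (n:ℝ) := Nat.cast_nonneg n
  have hsqc : 0 ≤ Real.sqrt n * c := mul_nonneg (Real.sqrt_nonneg _) hc
  refine A.opNorm_le_bound hsqc fun v => ?_
  -- A v is the limit of the partial sums ∑_{i ∈ F} A (Q i v)
  have hlim : Filter.Tendsto (fun F : Finset I => ‖∑ i ∈ F, A (Q i v)‖)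
      Filter.atTop (nhds ‖A v‖) := by
    have h1 := ((A.continuous.tendsto v).comp (hQsum v)).norm
    simpa [Function.comp_def, map_sum] using h1
  refine le_of_tendsto hlim (Filter.Eventually.of_forall fun F => ?_)
  set x : I → H := fun i => A (Q i v) with hxdef
  -- pointwise versions of the operator identities
  have hQorth' : ∀ i j, i ≠ j → Q i (Q j v) = 0 := fun i j hij => by
    have := congrArg (fun (T : H →L[ℂ] H) => T v) (hQorth i j hij)
    simpa using this
  have hQproj' : ∀ i, Q i (Q i v) = Q i v := fun i => by
    have := congrArg (fun (T : H →L[ℂ] H) => T v) (hQproj i)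
    simpa using this
  have hPx : ∀ i, P i (x i) = x i := fun i => by
    have := congrArg (fun (T : H →L[ℂ] H) => T v) (hA i)
    simpa [hxdef] using this
  -- Step 1: ∑_{i∈F} ‖Q i v‖² ≤ ‖v‖²
  have horthQ : ∀ i ∈ F, ∀ j ∈ F, i ≠ j → ⟪Q i v, Q j v⟫ = 0 := by
    intro i _ j _ hij
    rw [sa_inner_move (hQsa i), hQorth' i j hij, inner_zero_right]
  have hT2 : ‖∑ i ∈ F, Q i v‖ ^ 2 = ∑ i ∈ F, ‖Q i v‖ ^ 2 :=
    norm_sq_sum_of_orth F _ horthQ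
  have hTle : ‖∑ i ∈ F, Q i v‖ ≤ ‖v‖ := by
    set T := ∑ i ∈ F, Q i v with hTdef
    refine norm_le_of_mul_self_le (norm_nonneg _) (norm_nonneg _) ?_
    have hQT : ∀ i ∈ F, Q i T = Q i v := by
      intro i hi
      rw [hTdef, map_sum, Finset.sum_eq_single_of_mem i hi
        (fun j hj hji => hQorth' i j (Ne.symm hji))]
      exact hQproj' i
    have h2 : ⟪T, T⟫ = ⟪v, T⟫ := by
      conv_lhs => rw [hTdef]
      rw [sum_inner, Finset.sum_congr rfl
        (fun i hi => (sa_inner_move (hQsa i) v T).trans (by rw [hQT i hi])),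
        ← inner_sum, ← hTdef]
    have h3 : ‖T‖ * ‖T‖ = RCLike.re ⟪T, T⟫ := by
      rw [inner_self_eq_norm_sq (𝕜 := ℂ)]; ring
    calc ‖T‖ * ‖T‖ = RCLike.re ⟪v, T⟫ := by rw [h3, h2]
      _ ≤ ‖v‖ * ‖T‖ := re_inner_le_norm v T
  have hQsum2 : ∑ i ∈ F, ‖Q i v‖ ^ 2 ≤ ‖v‖ ^ 2 := by
    rw [← hT2]
    exact pow_le_pow_left₀ (norm_nonneg _) hTle 2
  -- Step 2: ∑ ‖x i‖² ≤ c² ‖v‖²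
  have hx_le : ∀ i, ‖x i‖ ≤ c * ‖Q i v‖ := fun i => by
    have : x i = (A ∘L Q i) (Q i v) := by
      simp [hxdef, hQproj' i]
    rw [this]
    calc ‖(A ∘L Q i) (Q i v)‖ ≤ ‖A ∘L Q i‖ * ‖Q i v‖ := le_opNorm _ _
      _ ≤ c * ‖Q i v‖ := by
        exact mul_le_mul_of_nonneg_right (hAc i) (norm_nonneg _)
  have hxsum : ∑ i ∈ F, ‖x i‖ ^ 2 ≤ c ^ 2 * ‖v‖ ^ 2 := by
    calc ∑ i ∈ F, ‖x i‖ ^ 2 ≤ ∑ i ∈ F, c ^ 2 * ‖Q i v‖ ^ 2 := by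
          refine Finset.sum_le_sum fun i _ => ?_
          have := pow_le_pow_left₀ (norm_nonneg _) (hx_le i) 2
          calc ‖x i‖ ^ 2 ≤ (c * ‖Q i v‖) ^ 2 := this
            _ = c ^ 2 * ‖Q i v‖ ^ 2 := by ring
      _ = c ^ 2 * ∑ i ∈ F, ‖Q i v‖ ^ 2 := by rw [Finset.mul_sum]
      _ ≤ c ^ 2 * ‖v‖ ^ 2 := mul_le_mul_of_nonneg_left hQsum2 (sq_nonneg c)
  -- Step 3: main estimate on S = ∑ x i
  set S := ∑ i ∈ F, x i with hSdef
  -- ∑ ‖P i S‖² ≤ n ‖S‖²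
  have hPS : ∑ i ∈ F, ‖P i S‖ ^ 2 ≤ (n : ℝ) * ‖S‖ ^ 2 := by
    have h1 : ∀ i, (‖P i S‖ : ℝ) ^ 2 = RCLike.re ⟪S, P i S⟫ := fun i => by
      rw [← inner_self_eq_norm_sq (𝕜 := ℂ) (P i S)]
      congr 1
      calc ⟪P i S, P i S⟫ = ⟪S, P i (P i S)⟫ := sa_inner_move (hPsa i) S (P i S)
        _ = ⟪S, P i S⟫ := by
            congr 1
            have := congrArg (fun (T : H →L[ℂ] H) => T S) (hPproj i)
            simpa using this
    calc ∑ i ∈ F, ‖P i S‖ ^ 2 = RCLike.re ⟪S, (∑ i ∈ F, P i) S⟫ := by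
          rw [Finset.sum_congr rfl fun i _ => h1 i, ← map_sum, ← inner_sum]
          congr 2
          simp [ContinuousLinearMap.sum_apply]
      _ ≤ ‖S‖ * ‖(∑ i ∈ F, P i) S‖ := re_inner_le_norm _ _
      _ ≤ ‖S‖ * (‖∑ i ∈ F, P i‖ * ‖S‖) :=
          mul_le_mul_of_nonneg_left (le_opNorm _ _) (norm_nonneg _)
      _ ≤ ‖S‖ * ((n : ℝ) * ‖S‖) := by
          refine mul_le_mul_of_nonneg_left ?_ (norm_nonneg _)
          exact mul_le_mul_of_nonneg_right (hPbound F) (norm_nonneg _)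
      _ = (n : ℝ) * ‖S‖ ^ 2 := by ring
  -- ‖S‖² ≤ √(∑‖x i‖²) √(∑‖P i S‖²)
  have hS2 : ‖S‖ * ‖S‖ ≤
      Real.sqrt (∑ i ∈ F, ‖x i‖ ^ 2) * Real.sqrt (∑ i ∈ F, ‖P i S‖ ^ 2) := by
    have h1 : ‖S‖ * ‖S‖ = RCLike.re ⟪S, S⟫ := by
      rw [inner_self_eq_norm_sq (𝕜 := ℂ)]; ring
    have h2 : ⟪S, S⟫ = ∑ i ∈ F, ⟪x i, P i S⟫ := by
      conv_lhs => rw [hSdef]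
      rw [sum_inner]
      refine Finset.sum_congr rfl fun i _ => ?_
      calc ⟪x i, S⟫ = ⟪P i (x i), S⟫ := by rw [hPx i]
        _ = ⟪x i, P i S⟫ := sa_inner_move (hPsa i) (x i) S
    calc ‖S‖ * ‖S‖ = ∑ i ∈ F, RCLike.re ⟪x i, P i S⟫ := by rw [h1, h2, map_sum]
      _ ≤ ∑ i ∈ F, ‖x i‖ * ‖P i S‖ :=
          Finset.sum_le_sum fun i _ => re_inner_le_norm _ _
      _ ≤ _ := cs_sqrt F _ _
  -- put everything together
  have hsq1 : Real.sqrt (∑ i ∈ F, ‖x i‖ ^ 2) ≤ c * ‖v‖ := by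
    calc Real.sqrt (∑ i ∈ F, ‖x i‖ ^ 2) ≤ Real.sqrt (c ^ 2 * ‖v‖ ^ 2) :=
          Real.sqrt_le_sqrt hxsum
      _ = c * ‖v‖ := by
          rw [← mul_pow, Real.sqrt_sq (mul_nonneg hc (norm_nonneg _))]
  have hsq2 : Real.sqrt (∑ i ∈ F, ‖P i S‖ ^ 2) ≤ Real.sqrt n * ‖S‖ := by
    calc Real.sqrt (∑ i ∈ F, ‖P i S‖ ^ 2) ≤ Real.sqrt ((n : ℝ) * ‖S‖ ^ 2) :=
          Real.sqrt_le_sqrt hPS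
      _ = Real.sqrt n * ‖S‖ := by
          rw [Real.sqrt_mul hn0, Real.sqrt_sq (norm_nonneg _)]
  have hfin : ‖S‖ * ‖S‖ ≤ (Real.sqrt n * c * ‖v‖) * ‖S‖ := by
    calc ‖S‖ * ‖S‖ ≤ Real.sqrt (∑ i ∈ F, ‖x i‖ ^ 2) *
          Real.sqrt (∑ i ∈ F, ‖P i S‖ ^ 2) := hS2
      _ ≤ (c * ‖v‖) * (Real.sqrt n * ‖S‖) := by
          refine mul_le_mul hsq1 hsq2 (Real.sqrt_nonneg _)
            (mul_nonneg hc (norm_nonneg _))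
      _ = (Real.sqrt n * c * ‖v‖) * ‖S‖ := by ring
  exact norm_le_of_mul_self_le (norm_nonneg _)
    (mul_nonneg hsqc (norm_nonneg _)) hfin
end

section
/- Let f : X → Y be a uniform covering of uniform bornological coarse spaces. Then the induced map 𝒪^∞(f) : 𝒪^∞(X) → 𝒪^∞(Y), (t,x) ↦ (t, f(x)), is a branched coarse covering relative to the big family 𝒪^-(Y) = ((−∞,n) × Y)_{n∈ℕ}, with connection P̂ := (ℝ × ℝ) × P, where P is the connection for f. -/
/-- The hybrid (cone) coarse entourages of `𝒪^∞(Y) = ℝ × Y`: coarse entourages of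
`ℝ ⊗ Y` (bounded time-distance, controlled `Y`-projection) which, for every uniform
scale of `ℝ × Y`, are eventually (in the time direction) of that uniform scale. -/
def coneEnt {Y : Type*} (CY : CoarseStructureOn Y) (UY : Set (Set (Y × Y))) :
    Set (Set ((ℝ × Y) × (ℝ × Y))) :=
  {V | (∃ r : ℝ, ∀ p ∈ V, |p.1.1 - p.2.1| ≤ r) ∧
       ((fun p : (ℝ × Y) × (ℝ × Y) => (p.1.2, p.2.2)) '' V ∈ CY.ent) ∧
       (∀ ε : ℝ, 0 < ε → ∀ Uu ∈ UY, ∃ n : ℕ, ∀ p ∈ V, (n : ℝ) ≤ p.2.1 →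
          |p.1.1 - p.2.1| < ε ∧ (p.1.2, p.2.2) ∈ Uu)}

/-- The bornology of the cone `ℝ × Y`: subsets of products of a bounded interval with a
bounded subset of `Y`. -/
def coneBdd {Y : Type*} (BY : Set (Set Y)) : Set (Set (ℝ × Y)) :=
  {B | ∃ r : ℝ, ∃ B0 ∈ BY, B ⊆ {q : ℝ × Y | |q.1| ≤ r ∧ q.2 ∈ B0}}

/-- If `f : X → Y` is a uniform covering with connection `P`, then
`𝒪^∞(f) : 𝒪^∞(X) → 𝒪^∞(Y)` is a branched coarse covering relative to the big family
`𝒪^-(Y) = ((-∞,n) × Y)_n`, with connection `P̂ = (ℝ × ℝ) × P`. -/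
theorem stmt_13 {X Y : Type*}
    (CX : CoarseStructureOn X) (CY : CoarseStructureOn Y)
    (UX : Set (Set (X × X))) (UY : Set (Set (Y × Y)))
    (BX : Set (Set X)) (BY : Set (Set Y))
    (f : X → Y) (P : Set (X × X))
    -- `f` is controlled, uniform, bornological and has locally finite fibres
    (hcontrolled : ∀ U ∈ CX.ent, (fun p : X × X => (f p.1, f p.2)) '' U ∈ CY.ent)
    (huniform : ∀ U ∈ UY, {p : X × X | (f p.1, f p.2) ∈ U} ∈ UX)
    (hborn : ∀ B ∈ BX, f '' B ∈ BY)
    (hlocfin : ∀ y : Y, ∀ B ∈ BX, (f ⁻¹' {y} ∩ B).Finite)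
    -- (a): for every uniform entourage `U` of `Y`, `f⁻¹(U) ∩ P` is a uniform and a
    -- coarse entourage of `X`
    (ha : ∀ U ∈ UY, ({p : X × X | (f p.1, f p.2) ∈ U} ∩ P) ∈ UX ∧
                    ({p : X × X | (f p.1, f p.2) ∈ U} ∩ P) ∈ CX.ent)
    -- (b): unique `P`-lifting at some uniform scale `U` of `Y`
    (hb : ∃ U ∈ UY, ∀ y' y : Y, (y', y) ∈ U → ∀ x : X, f x = y →
          ∃! x' : X, f x' = y' ∧ (x', x) ∈ P)
    -- (c): the entourages `f⁻¹(U) ∩ P` are cofinal in the uniform structure of `X`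
    (hc : ∀ W ∈ UX, ∃ U ∈ UY, ({p : X × X | (f p.1, f p.2) ∈ U} ∩ P) ⊆ W) :
    -- conclusions for `F = 𝒪^∞(f) : ℝ × X → ℝ × Y` with connection `P̂`
    ∀ F : ℝ × X → ℝ × Y, F = (fun q => (q.1, f q.2)) →
    -- `F` is controlled
    ((∀ V ∈ coneEnt CX UX, (fun p : (ℝ × X) × (ℝ × X) => (F p.1, F p.2)) '' V
        ∈ coneEnt CY UY) ∧
    -- `F` is bornological with locally finite fibres
    (∀ B ∈ coneBdd BX, F '' B ∈ coneBdd BY) ∧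
    (∀ q : ℝ × Y, ∀ B ∈ coneBdd BX, (F ⁻¹' {q} ∩ B).Finite) ∧
    -- connection condition at every coarse scale of the cone, away from a member
    -- `(-∞,n) × Y` of `𝒪^-(Y)`
    (∀ V ∈ coneEnt CY UY, ∃ n : ℕ,
      (∀ q' q : ℝ × Y, (q', q) ∈ V → (n : ℝ) ≤ q.1 → ∀ p : ℝ × X, F p = q →
        ∃! p' : ℝ × X, F p' = q' ∧ (p'.2, p.2) ∈ P) ∧
      ({p : (ℝ × X) × (ℝ × X) | (p.1.2, p.2.2) ∈ P} ∩
        {p : (ℝ × X) × (ℝ × X) | (F p.1, F p.2) ∈ V ∧ (n : ℝ) ≤ (F p.2).1}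
        ∈ coneEnt CX UX)) ∧
    -- every coarse entourage of the cone over `X` is eventually contained in `P̂`
    (∀ U ∈ coneEnt CX UX, ∃ n : ℕ, ∀ p ∈ U, (n : ℝ) ≤ (F p.2).1 →
      (p.1.2, p.2.2) ∈ P)) := by
  intro F hF
  subst hF
  obtain ⟨U0, hU0, hlift⟩ := hb
  refine ⟨?_, ?_, ?_, ?_, ?_⟩
  · -- controlled
    rintro V ⟨⟨r, hr⟩, hproj, hev⟩
    refine ⟨⟨r, ?_⟩, ?_, ?_⟩
    · rintro p ⟨q, hq, rfl⟩
      exact hr q hq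
    · have : (fun p : (ℝ × Y) × (ℝ × Y) => (p.1.2, p.2.2)) ''
          ((fun p : (ℝ × X) × (ℝ × X) => ((p.1.1, f p.1.2), (p.2.1, f p.2.2))) '' V)
          = (fun p : X × X => (f p.1, f p.2)) ''
            ((fun p : (ℝ × X) × (ℝ × X) => (p.1.2, p.2.2)) '' V) := by
        ext z
        constructor
        · rintro ⟨_, ⟨q, hq, rfl⟩, rfl⟩
          exact ⟨(q.1.2, q.2.2), ⟨q, hq, rfl⟩, rfl⟩
        · rintro ⟨_, ⟨q, hq, rfl⟩, rfl⟩
          exact ⟨((q.1.1, f q.1.2), (q.2.1, f q.2.2)), ⟨q, hq, rfl⟩, rfl⟩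
      rw [this]
      exact hcontrolled _ hproj
    · intro ε hε Uu hUu
      obtain ⟨n, hn⟩ := hev ε hε _ (huniform Uu hUu)
      refine ⟨n, ?_⟩
      rintro p ⟨q, hq, rfl⟩ ht
      exact hn q hq ht
  · -- bornological
    rintro B ⟨r, B0, hB0, hB⟩
    refine ⟨r, f '' B0, hborn B0 hB0, ?_⟩
    rintro q ⟨p, hp, rfl⟩
    exact ⟨(hB hp).1, ⟨p.2, (hB hp).2, rfl⟩⟩
  · -- locally finite fibres
    rintro q B ⟨r, B0, hB0, hB⟩
    have hfin := hlocfin q.2 B0 hB0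
    have hsub : (fun p : ℝ × X => (p.1, f p.2)) ⁻¹' {q} ∩ B ⊆
        (fun x : X => (q.1, x)) '' (f ⁻¹' {q.2} ∩ B0) := by
      rintro ⟨t, x⟩ ⟨hq, hpB⟩
      simp only [Set.mem_preimage, Set.mem_singleton_iff, Prod.ext_iff] at hq
      exact ⟨x, ⟨hq.2, (hB hpB).2⟩, by simp [hq.1]⟩
    exact (hfin.image _).subset hsub
  · -- connection condition at every scale
    rintro V ⟨⟨r, hr⟩, hVproj, hev⟩
    obtain ⟨n, hn⟩ := hev 1 one_pos U0 hU0
    refine ⟨n, ?_, ?_⟩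
    · rintro q' q hqV hq1 p hp
      have hU : (q'.2, q.2) ∈ U0 := (hn (q', q) hqV hq1).2
      have hfx : f p.2 = q.2 := congrArg Prod.snd hp
      obtain ⟨x', ⟨hx'1, hx'2⟩, hx'u⟩ := hlift q'.2 q.2 hU p.2 hfx
      refine ⟨(q'.1, x'), ⟨by simp [hx'1], hx'2⟩, ?_⟩
      rintro ⟨t, x⟩ ⟨hFp, hPp⟩
      simp only [Prod.ext_iff] at hFp
      have := hx'u x ⟨hFp.2, hPp⟩
      simp [this, hFp.1]
    · refine ⟨⟨r, ?_⟩, ?_, ?_⟩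
      · rintro p ⟨_, hV, _⟩
        exact hr _ hV
      · refine CX.subset_mem (ha U0 hU0).2 ?_
        rintro z ⟨p, ⟨hP, hV, hge⟩, rfl⟩
        have := (hn _ hV hge).2
        exact ⟨this, hP⟩
      · intro ε hε W hW
        obtain ⟨U, hU, hUW⟩ := hc W hW
        obtain ⟨m, hm⟩ := hev ε hε U hU
        refine ⟨m, ?_⟩
        rintro p ⟨hP, hV, _⟩ hge
        have h := hm _ hV hge
        exact ⟨h.1, hUW ⟨h.2, hP⟩⟩
  · -- eventual containment in P̂
    rintro U ⟨_, _, hev⟩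
    obtain ⟨n, hn⟩ := hev 1 one_pos _ (ha U0 hU0).1
    exact ⟨n, fun p hp ht => ((hn p hp ht).2).2⟩
end

section
/- Let f : X → Y be a surjective local isometry of length (path) metric spaces with the path-lifting property: every rectifiable path γ in Y starting at f(x) lifts to a path in X starting at x with the same length. For r ≥ 0 define Z_r := {y ∈ Y | the fibre f^{-1}(y) is not r-separated}, i.e. there exist distinct x, x' ∈ f^{-1}(y) with d(x,x') ≤ r. Then for all r, s ≥ 0: if y ∈ Z_r and d(y', y) ≤ s then y' ∈ Z_{r+2s}. Consequently, if V_s denotes the metric entourage of width s of Y, then V_s[Z_r] ⊆ Z_{r+2s}, so the family (Z_r)_{r ≥ 0} is a big family for the metric coarse structure of Y. -/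
/-- For a surjective local isometry `f : X → Y` of length metric spaces with unique
path lifting, the non-separation loci `Z_r = {y | f⁻¹(y) is not r-separated}` satisfy
`V_s[Z_r] ⊆ Z_{r+2s}`, so they form a big family for the metric coarse structure. -/
theorem stmt_14 {X Y : Type*} [MetricSpace X] [MetricSpace Y] (f : X → Y)
    (hsurj : Function.Surjective f)
    -- `f` is a local isometry
    (hlociso : ∀ x : X, ∃ ε : ℝ, 0 < ε ∧ ∀ x₁ ∈ Metric.ball x ε, ∀ x₂ ∈ Metric.ball x ε,
      dist (f x₁) (f x₂) = dist x₁ x₂)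
    -- `Y` is a length (path metric) space
    (hlengthY : ∀ a b : Y, ∀ ε : ℝ, 0 < ε → ∃ γ : ℝ → Y,
      ContinuousOn γ (Set.Icc 0 1) ∧ γ 0 = a ∧ γ 1 = b ∧
      eVariationOn γ (Set.Icc 0 1) ≤ ENNReal.ofReal (dist a b + ε))
    -- `X` is a length (path metric) space
    (hlengthX : ∀ a b : X, ∀ ε : ℝ, 0 < ε → ∃ γ : ℝ → X,
      ContinuousOn γ (Set.Icc 0 1) ∧ γ 0 = a ∧ γ 1 = b ∧
      eVariationOn γ (Set.Icc 0 1) ≤ ENNReal.ofReal (dist a b + ε))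
    -- unique lifting of rectifiable paths, with the same length
    (hlift : ∀ γ : ℝ → Y, ContinuousOn γ (Set.Icc 0 1) →
      eVariationOn γ (Set.Icc 0 1) ≠ ⊤ → ∀ x : X, f x = γ 0 →
      ∃ γ' : ℝ → X, ContinuousOn γ' (Set.Icc 0 1) ∧ γ' 0 = x ∧
        (∀ t ∈ Set.Icc (0 : ℝ) 1, f (γ' t) = γ t) ∧
        eVariationOn γ' (Set.Icc 0 1) = eVariationOn γ (Set.Icc 0 1) ∧
        ∀ γ'' : ℝ → X, ContinuousOn γ'' (Set.Icc 0 1) → γ'' 0 = x →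
          (∀ t ∈ Set.Icc (0 : ℝ) 1, f (γ'' t) = γ t) →
          Set.EqOn γ' γ'' (Set.Icc 0 1)) :
    ∀ r s : ℝ, 0 ≤ r → 0 ≤ s →
      -- pointwise statement
      (∀ y ∈ {y : Y | ∃ x x' : X, f x = y ∧ f x' = y ∧ x ≠ x' ∧ dist x x' ≤ r},
        ∀ y' : Y, dist y' y ≤ s →
          y' ∈ {y : Y | ∃ x x' : X, f x = y ∧ f x' = y ∧ x ≠ x' ∧ dist x x' ≤ r + 2 * s}) ∧
      -- consequently `V_s[Z_r] ⊆ Z_{r+2s}`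
      ({y' : Y | ∃ y ∈ {y : Y | ∃ x x' : X, f x = y ∧ f x' = y ∧ x ≠ x' ∧ dist x x' ≤ r},
          dist y' y ≤ s} ⊆
        {y : Y | ∃ x x' : X, f x = y ∧ f x' = y ∧ x ≠ x' ∧ dist x x' ≤ r + 2 * s}) ∧
      -- and the family `(Z_r)` is increasing
      (∀ r' : ℝ, r ≤ r' →
        {y : Y | ∃ x x' : X, f x = y ∧ f x' = y ∧ x ≠ x' ∧ dist x x' ≤ r} ⊆
        {y : Y | ∃ x x' : X, f x = y ∧ f x' = y ∧ x ≠ x' ∧ dist x x' ≤ r'}) := by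
  intro r s hr hs
  have h0mem : (0:ℝ) ∈ Set.Icc (0:ℝ) 1 := ⟨le_refl 0, zero_le_one⟩
  have h1mem : (1:ℝ) ∈ Set.Icc (0:ℝ) 1 := ⟨zero_le_one, le_refl 1⟩
  have hrefl : ∀ t : ℝ, t ∈ Set.Icc (0:ℝ) 1 → (1 - t) ∈ Set.Icc (0:ℝ) 1 := by
    rintro t ⟨ht0, ht1⟩
    exact ⟨by linarith, by linarith⟩
  have key : ∀ y ∈ {y : Y | ∃ x x' : X, f x = y ∧ f x' = y ∧ x ≠ x' ∧ dist x x' ≤ r},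
      ∀ y' : Y, dist y' y ≤ s →
        y' ∈ {y : Y | ∃ x x' : X, f x = y ∧ f x' = y ∧ x ≠ x' ∧ dist x x' ≤ r + 2 * s} := by
    rintro y ⟨x, x', hx, hx', hne, hdxx⟩ y' hdy
    have hrpos : 0 < r := lt_of_lt_of_le (dist_pos.2 hne) hdxx
    have hdyy : dist y y' ≤ s := by rw [dist_comm]; exact hdy
    -- the main lifting construction: for every `ε > 0` we get a distinct pair over `y'`
    -- whose members are at distance `≤ s + ε` from `x` resp. `x'`
    have hL : ∀ ε : ℝ, 0 < ε → ∃ a b : X, f a = y' ∧ f b = y' ∧ a ≠ b ∧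
        dist x a ≤ s + ε ∧ dist x' b ≤ s + ε := by
      intro ε hε
      obtain ⟨γ, hγc, hγ0, hγ1, hγv⟩ := hlengthY y y' ε hε
      have hvt : eVariationOn γ (Set.Icc 0 1) ≠ ⊤ := (hγv.trans_lt ENNReal.ofReal_lt_top).ne
      obtain ⟨γ₁, hc1, h01, hp1, hv1, hu1⟩ := hlift γ hγc hvt x (by rw [hγ0]; exact hx)
      obtain ⟨γ₂, hc2, h02, hp2, hv2, hu2⟩ := hlift γ hγc hvt x' (by rw [hγ0]; exact hx')
      have hdist : ∀ (δ : ℝ → X), δ 0 = x ∨ δ 0 = x' →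
          eVariationOn δ (Set.Icc 0 1) = eVariationOn γ (Set.Icc 0 1) →
          dist (δ 0) (δ 1) ≤ s + ε := by
        intro δ _ hvar
        have he : edist (δ 0) (δ 1) ≤ ENNReal.ofReal (dist y y' + ε) := by
          calc edist (δ 0) (δ 1) ≤ eVariationOn δ (Set.Icc 0 1) :=
                eVariationOn.edist_le δ h0mem h1mem
            _ = eVariationOn γ (Set.Icc 0 1) := hvar
            _ ≤ _ := hγv
        have h2 : dist (δ 0) (δ 1) ≤ dist y y' + ε := by
          rw [dist_edist]
          exact ENNReal.toReal_le_of_le_ofReal (add_nonneg dist_nonneg hε.le) he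
        linarith
      -- distinctness of the endpoints, by uniqueness of lifts of the reversed path
      have hab : γ₁ 1 ≠ γ₂ 1 := by
        intro hEq
        set δ : ℝ → Y := fun t => γ (1 - t) with hδ
        have hδc : ContinuousOn δ (Set.Icc 0 1) :=
          hγc.comp ((continuous_const.sub continuous_id).continuousOn) hrefl
        have hδv : eVariationOn δ (Set.Icc 0 1) ≠ ⊤ := by
          have : eVariationOn δ (Set.Icc 0 1) ≤ eVariationOn γ (Set.Icc 0 1) :=
            eVariationOn.comp_le_of_antitoneOn γ (fun t => 1 - t)
              (fun u hu v hv huv => by simp only []; linarith) hrefl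
          exact fun h => hvt (top_le_iff.1 (h ▸ this))
        have hfδ0 : f (γ₁ 1) = δ 0 := by
          have : f (γ₁ 1) = γ 1 := hp1 1 h1mem
          simpa [hδ] using this
        obtain ⟨δ₀, hδ₀c, hδ₀0, hδ₀p, hδ₀v, hδ₀u⟩ := hlift δ hδc hδv (γ₁ 1) hfδ0
        have hcomp : ∀ (ρ : ℝ → X), ContinuousOn ρ (Set.Icc 0 1) →
            (∀ t ∈ Set.Icc (0:ℝ) 1, f (ρ t) = γ t) →
            ContinuousOn (fun t => ρ (1 - t)) (Set.Icc 0 1) ∧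
            (∀ t ∈ Set.Icc (0:ℝ) 1, f (ρ (1 - t)) = δ t) := by
          intro ρ hρc hρp
          refine ⟨hρc.comp ((continuous_const.sub continuous_id).continuousOn) hrefl, ?_⟩
          intro t ht
          exact hρp (1 - t) (hrefl t ht)
        obtain ⟨hc1', hp1'⟩ := hcomp γ₁ hc1 hp1
        obtain ⟨hc2', hp2'⟩ := hcomp γ₂ hc2 hp2
        have e1 : Set.EqOn δ₀ (fun t => γ₁ (1 - t)) (Set.Icc 0 1) :=
          hδ₀u _ hc1' (by simp) hp1'
        have e2 : Set.EqOn δ₀ (fun t => γ₂ (1 - t)) (Set.Icc 0 1) :=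
          hδ₀u _ hc2' (by simp [← hEq]) hp2'
        have : γ₁ (1 - 1) = γ₂ (1 - 1) := (e1 h1mem).symm.trans (e2 h1mem)
        rw [show (1:ℝ) - 1 = 0 by norm_num, h01, h02] at this
        exact hne this
      refine ⟨γ₁ 1, γ₂ 1, ?_, ?_, hab, ?_, ?_⟩
      · rw [hp1 1 h1mem]; exact hγ1
      · rw [hp2 1 h1mem]; exact hγ1
      · have := hdist γ₁ (Or.inl h01) hv1; rwa [h01] at this
      · have := hdist γ₂ (Or.inr h02) hv2; rwa [h02] at this
    -- now extract a pair at distance `≤ r + 2s`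
    by_contra hcon
    have hcon' : ∀ a b : X, f a = y' → f b = y' → a ≠ b → ¬ (dist a b ≤ r + 2 * s) := by
      intro a b h1 h2 h3 h4
      exact hcon ⟨a, b, h1, h2, h3, h4⟩
    obtain ⟨a, b, hfa, hfb, hab, hxa, hxb⟩ := hL (r/2) (by positivity)
    have hstep : ∀ ε : ℝ, 0 < ε → ε ≤ r/2 → dist x a ≤ s + ε ∧ dist x' b ≤ s + ε := by
      intro ε hε hεr
      obtain ⟨a', b', hfa', hfb', hab', hxa', hxb'⟩ := hL ε hε
      have ha : a' = a := by
        by_contra hne'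
        refine hcon' a' a hfa' hfa hne' ?_
        calc dist a' a ≤ dist a' x + dist x a := dist_triangle a' x a
          _ = dist x a' + dist x a := by rw [dist_comm a' x]
          _ ≤ (s + ε) + (s + r/2) := add_le_add hxa' hxa
          _ ≤ r + 2 * s := by linarith
      have hb : b' = b := by
        by_contra hne'
        refine hcon' b' b hfb' hfb hne' ?_
        calc dist b' b ≤ dist b' x' + dist x' b := dist_triangle b' x' b
          _ = dist x' b' + dist x' b := by rw [dist_comm b' x']
          _ ≤ (s + ε) + (s + r/2) := add_le_add hxb' hxb
          _ ≤ r + 2 * s := by linarith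
      exact ⟨ha ▸ hxa', hb ▸ hxb'⟩
    have hxa0 : dist x a ≤ s := by
      by_contra h
      push_neg at h
      have hε : 0 < min (r/2) ((dist x a - s)/2) :=
        lt_min (by positivity) (by linarith)
      have := (hstep _ hε (min_le_left _ _)).1
      have h2 : min (r/2) ((dist x a - s)/2) ≤ (dist x a - s)/2 := min_le_right _ _
      linarith
    have hxb0 : dist x' b ≤ s := by
      by_contra h
      push_neg at h
      have hε : 0 < min (r/2) ((dist x' b - s)/2) :=
        lt_min (by positivity) (by linarith)
      have := (hstep _ hε (min_le_left _ _)).2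
      have h2 : min (r/2) ((dist x' b - s)/2) ≤ (dist x' b - s)/2 := min_le_right _ _
      linarith
    refine hcon' a b hfa hfb hab ?_
    calc dist a b ≤ dist a x + dist x x' + dist x' b := dist_triangle4 a x x' b
      _ = dist x a + dist x x' + dist x' b := by rw [dist_comm a x]
      _ ≤ s + r + s := by exact add_le_add (add_le_add hxa0 hdxx) hxb0
      _ ≤ r + 2 * s := by linarith
  refine ⟨key, ?_, ?_⟩
  · rintro y' ⟨y, hy, hd⟩
    exact key y hy y' hd
  · rintro r' hrr' y ⟨x, x', h1, h2, h3, h4⟩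
    exact ⟨x, x', h1, h2, h3, h4.trans hrr'⟩
end
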